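/- Let Γ be a G-arc-transitive digraph, where G is a group of automorphisms of Γ, let s ≥ 2 be an integer, let v be a vertex of Γ, and let g ∈ G be such that v → v^g. Then Γ is (G,s)-arc-transitive if and only if for each i ∈ {1,…,s−1}, ⋂_{j=0}^{i−1} g^{−j}G_v g^{j} = (⋂_{j=0}^{i} g^{−(j−1)}G_v g^{j−1}) · (⋂_{j=0}^{i} g^{−j}G_v g^{j}), where G_v denotes the stabilizer of v in G. -/

import Mathlib

open scoped Pointwise

/-- An `s`-arc of the digraph `(V, r)`: vertices `v 0, v 1, …, v s` with
`v i → v (i+1)` for all `i < s`. -/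
def IsSArc {V : Type*} (r : V → V → Prop) (s : ℕ) (v : ℕ → V) : Prop :=
  ∀ i < s, r (v i) (v (i + 1))

/-- The digraph `(V, r)` is `(G, s)`-arc-transitive: `G` acts transitively on `s`-arcs. -/
def ArcTrans {V : Type*} (r : V → V → Prop) (G : Subgroup (Equiv.Perm V)) (s : ℕ) : Prop :=
  ∀ v w : ℕ → V, IsSArc r s v → IsSArc r s w → ∃ g ∈ G, ∀ i ≤ s, g (v i) = w i

/-- The conjugate `g⁻ʲ G_v gʲ` of the stabilizer of `v`, for `j : ℤ`. -/
def ConjStab {V : Type*} (G : Subgroup (Equiv.Perm V)) (v : V) (g : Equiv.Perm V) (j : ℤ) :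
    Set (Equiv.Perm V) :=
  (fun x => (g ^ j)⁻¹ * x * g ^ j) '' {x : Equiv.Perm V | x ∈ G ∧ x v = v}

/-- Pointwise stabilizer (within `G`) of the vertices `g^t v` for `a ≤ t ≤ b`. -/
def MySt {V : Type*} (G : Subgroup (Equiv.Perm V)) (v : V) (g : Equiv.Perm V) (a b : ℤ) :
    Set (Equiv.Perm V) :=
  {x : Equiv.Perm V | x ∈ G ∧ ∀ t : ℤ, a ≤ t → t ≤ b → x ((g ^ t) v) = (g ^ t) v}

section Aux

variable {V : Type*} {r : V → V → Prop} {G : Subgroup (Equiv.Perm V)} {v : V} {g : Equiv.Perm V}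

lemma aux_r (hGaut : ∀ g ∈ G, ∀ a b, r a b ↔ r (g a) (g b)) (hg : g ∈ G)
    (hvg : r v (g v)) (t : ℤ) : r ((g ^ t) v) ((g ^ (t + 1)) v) := by
  have h := (hGaut (g ^ t) (G.zpow_mem hg t) v (g v)).mp hvg
  have e : (g ^ (t + 1)) v = (g ^ t) (g v) := by
    rw [zpow_add_one]; rfl
  rw [e]; exact h

lemma aux_arc (hGaut : ∀ g ∈ G, ∀ a b, r a b ↔ r (g a) (g b)) (hg : g ∈ G)
    (hvg : r v (g v)) (n : ℕ) (N : ℤ) :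
    IsSArc r n (fun k => (g ^ ((k : ℤ) + N)) v) := by
  intro i _
  have h := aux_r hGaut hg hvg ((i : ℤ) + N)
  have e : ((i + 1 : ℕ) : ℤ) + N = (i : ℤ) + N + 1 := by push_cast; ring
  simp only [e]
  exact h

lemma map_to_canon (hGaut : ∀ g ∈ G, ∀ a b, r a b ↔ r (g a) (g b)) (hg : g ∈ G)
    (hvg : r v (g v)) (n : ℕ) (hn : ArcTrans r G n)
    (u : ℕ → V) (hu : IsSArc r n u) :
    ∃ x ∈ G, ∀ k ≤ n, x (u k) = (g ^ ((k : ℤ) - (n : ℤ))) v := by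
  have hc : IsSArc r n (fun k => (g ^ ((k : ℤ) - (n : ℤ))) v) := by
    simpa [sub_eq_add_neg] using aux_arc hGaut hg hvg n (-(n : ℤ))
  exact hn u _ hu hc

lemma extend_arc (hGaut : ∀ g ∈ G, ∀ a b, r a b ↔ r (g a) (g b)) (hg : g ∈ G)
    (hvg : r v (g v)) (harc : ArcTrans r G 1) (n : ℕ) (hn : 1 ≤ n)
    (u : ℕ → V) (hu : IsSArc r n u) :
    ∃ z, r (u n) z := by
  have h1 : IsSArc r 1 (fun k => u (n - 1 + k)) := by
    intro i hi
    have e0 : i = 0 := by omega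
    subst e0
    have h := hu (n - 1) (by omega)
    have e : n - 1 + 1 = n := by omega
    simpa [e] using h
  obtain ⟨x, hxG, hx⟩ := harc (fun k => (g ^ (k : ℤ)) v) (fun k => u (n - 1 + k))
      (by simpa using aux_arc hGaut hg hvg 1 0) h1
  have hx1 : x ((g ^ (1 : ℤ)) v) = u n := by
    have := hx 1 le_rfl
    have e : n - 1 + 1 = n := by omega
    simpa [e] using this
  have hr12 : r ((g ^ (1 : ℤ)) v) ((g ^ (2 : ℤ)) v) := by
    simpa using aux_r hGaut hg hvg 1
  have := (hGaut x hxG _ _).mp hr12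
  rw [hx1] at this
  exact ⟨x ((g ^ (2 : ℤ)) v), this⟩

lemma arcTrans_of_succ (hGaut : ∀ g ∈ G, ∀ a b, r a b ↔ r (g a) (g b)) (hg : g ∈ G)
    (hvg : r v (g v)) (harc : ArcTrans r G 1) (n : ℕ) (hn : 1 ≤ n)
    (h : ArcTrans r G (n + 1)) : ArcTrans r G n := by
  intro u w hu hw
  obtain ⟨zu, hzu⟩ := extend_arc hGaut hg hvg harc n hn u hu
  obtain ⟨zw, hzw⟩ := extend_arc hGaut hg hvg harc n hn w hw
  have hUarc : IsSArc r (n + 1) (fun k => if k ≤ n then u k else zu) := by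
    intro i hi
    rcases Nat.lt_or_ge i n with h' | h'
    · simp only [if_pos (by omega : i ≤ n), if_pos (by omega : i + 1 ≤ n)]
      exact hu i h'
    · simp only [if_pos (show i ≤ n by omega), if_neg (show ¬ i + 1 ≤ n by omega)]
      rw [show i = n by omega]
      exact hzu
  have hWarc : IsSArc r (n + 1) (fun k => if k ≤ n then w k else zw) := by
    intro i hi
    rcases Nat.lt_or_ge i n with h' | h'
    · simp only [if_pos (by omega : i ≤ n), if_pos (by omega : i + 1 ≤ n)]
      exact hw i h'
    · simp only [if_pos (show i ≤ n by omega), if_neg (show ¬ i + 1 ≤ n by omega)]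
      rw [show i = n by omega]
      exact hzw
  obtain ⟨x, hxG, hx⟩ := h _ _ hUarc hWarc
  refine ⟨x, hxG, fun k hk => ?_⟩
  have := hx k (by omega)
  simpa [if_pos hk] using this

lemma arcTrans_down (hGaut : ∀ g ∈ G, ∀ a b, r a b ↔ r (g a) (g b)) (hg : g ∈ G)
    (hvg : r v (g v)) (harc : ArcTrans r G 1) (n : ℕ) (hn : 1 ≤ n) :
    ∀ k, ArcTrans r G (n + k) → ArcTrans r G n := by
  intro k
  induction k generalizing n with
  | zero => exact fun h => h
  | succ k ih =>
      intro h
      have h' : ArcTrans r G (n + 1 + k) := by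
        rwa [show n + 1 + k = n + (k + 1) by omega]
      exact arcTrans_of_succ hGaut hg hvg harc n hn (ih (n + 1) (by omega) h')

/-- Transitivity of the `(m-1)`-arc-stabilizer on out-neighbours of `v`. -/
lemma outnbr (hGaut : ∀ g ∈ G, ∀ a b, r a b ↔ r (g a) (g b)) (hg : g ∈ G)
    (hvg : r v (g v)) (m : ℕ) (hm : ArcTrans r G (m + 1))
    (u' : V) (hru : r v u') :
    ∃ y ∈ MySt G v g (-(m : ℤ)) 0, y u' = g v := by
  have hδ₁ : IsSArc r (m + 1) (fun k => (g ^ ((k : ℤ) - (m : ℤ))) v) := by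
    simpa [sub_eq_add_neg] using aux_arc hGaut hg hvg (m + 1) (-(m : ℤ))
  have hδ₂ : IsSArc r (m + 1)
      (fun k => if k = m + 1 then u' else (g ^ ((k : ℤ) - (m : ℤ))) v) := by
    intro i hi
    rcases Nat.lt_or_ge i m with h' | h'
    · simp only [if_neg (by omega : ¬ i = m + 1), if_neg (by omega : ¬ i + 1 = m + 1)]
      have h := aux_r hGaut hg hvg ((i : ℤ) - (m : ℤ))
      have e : ((i + 1 : ℕ) : ℤ) - (m : ℤ) = (i : ℤ) - (m : ℤ) + 1 := by push_cast; ring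
      simp only [e]
      exact h
    · simp only [if_neg (show ¬ i = m + 1 by omega), if_pos (show i + 1 = m + 1 by omega),
        show ((i : ℤ) - (m : ℤ)) = 0 by omega, zpow_zero, Equiv.Perm.one_apply]
      exact hru
  obtain ⟨y, hyG, hy⟩ := hm _ _ hδ₂ hδ₁
  refine ⟨y, ⟨hyG, ?_⟩, ?_⟩
  · intro t ht1 ht2
    have hk := hy (t + m).toNat (by omega)
    have e : (((t + m).toNat : ℕ) : ℤ) = t + m := Int.toNat_of_nonneg (by omega)
    have e2 : (((t + m).toNat : ℕ) : ℤ) - (m : ℤ) = t := by omega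
    rw [if_neg (by omega : ¬ (t + m).toNat = m + 1)] at hk
    rw [e2] at hk
    exact hk
  · have := hy (m + 1) le_rfl
    rw [if_pos rfl] at this
    have e : ((m + 1 : ℕ) : ℤ) - (m : ℤ) = 1 := by push_cast; ring
    rw [e, zpow_one] at this
    exact this

lemma inv_fix {x : Equiv.Perm V} {z : V} (h : x z = z) : x⁻¹ z = z := by
  conv_lhs => rw [← h]
  exact x.symm_apply_apply z

/-- The main inductive step. -/
lemma main_step (hGaut : ∀ g ∈ G, ∀ a b, r a b ↔ r (g a) (g b)) (hg : g ∈ G)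
    (hvg : r v (g v)) (m : ℕ) (hm : ArcTrans r G (m + 1)) :
    ArcTrans r G (m + 2) ↔
      MySt G v g (-(m : ℤ)) 0 = MySt G v g (-(m : ℤ)) 1 * MySt G v g (-(m : ℤ) - 1) 0 := by
  constructor
  · intro h2
    refine Set.Subset.antisymm ?_ ?_
    · intro a ha
      have hav : a v = v := by
        have := ha.2 0 (by omega) le_rfl
        simpa using this
      have hainv : a⁻¹ v = v := inv_fix hav
      have hru : r v (a⁻¹ (g v)) := by
        have := (hGaut a⁻¹ (inv_mem ha.1) v (g v)).mp hvg
        rwa [hainv] at this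
      have hδ₁ : IsSArc r (m + 2) (fun k => (g ^ ((k : ℤ) - ((m : ℤ) + 1))) v) := by
        simpa [sub_eq_add_neg] using aux_arc hGaut hg hvg (m + 2) (-((m : ℤ) + 1))
      have hδ₂ : IsSArc r (m + 2)
          (fun k => if k = m + 2 then a⁻¹ (g v) else (g ^ ((k : ℤ) - ((m : ℤ) + 1))) v) := by
        intro i hi
        rcases Nat.lt_or_ge i (m + 1) with h' | h'
        · simp only [if_neg (by omega : ¬ i = m + 2), if_neg (by omega : ¬ i + 1 = m + 2)]
          have h := aux_r hGaut hg hvg ((i : ℤ) - ((m : ℤ) + 1))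
          have e : ((i + 1 : ℕ) : ℤ) - ((m : ℤ) + 1) = (i : ℤ) - ((m : ℤ) + 1) + 1 := by
            push_cast; ring
          simp only [e]
          exact h
        · simp only [if_neg (show ¬ i = m + 2 by omega),
            if_pos (show i + 1 = m + 2 by omega),
            show ((i : ℤ) - ((m : ℤ) + 1)) = 0 by omega, zpow_zero, Equiv.Perm.one_apply]
          exact hru
      obtain ⟨c, hcG, hc⟩ := h2 _ _ hδ₂ hδ₁
      have hcfix : ∀ t : ℤ, -(m : ℤ) - 1 ≤ t → t ≤ 0 → c ((g ^ t) v) = (g ^ t) v := by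
        intro t ht1 ht2
        have hk := hc (t + (m + 1)).toNat (by omega)
        have e : (((t + (m + 1)).toNat : ℕ) : ℤ) - ((m : ℤ) + 1) = t := by omega
        rw [if_neg (by omega : ¬ (t + (m + 1)).toNat = m + 2)] at hk
        rw [e] at hk
        exact hk
      have hcC : c ∈ MySt G v g (-(m : ℤ) - 1) 0 := ⟨hcG, hcfix⟩
      have hc1 : c (a⁻¹ (g v)) = g v := by
        have := hc (m + 2) le_rfl
        rw [if_pos rfl] at this
        have e : ((m + 2 : ℕ) : ℤ) - ((m : ℤ) + 1) = 1 := by push_cast; ring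
        rwa [e, zpow_one] at this
      have hcinv : c⁻¹ (g v) = a⁻¹ (g v) := by
        conv_lhs => rw [← hc1]
        exact c.symm_apply_apply _
      refine Set.mem_mul.mpr ⟨a * c⁻¹, ⟨mul_mem ha.1 (inv_mem hcG), ?_⟩, c, hcC, by group⟩
      intro t ht1 ht2
      rcases (by omega : t ≤ 0 ∨ t = 1) with h' | h'
      · have hcf : c ((g ^ t) v) = (g ^ t) v := hcfix t (by omega) h'
        rw [Equiv.Perm.mul_apply, inv_fix hcf]
        exact ha.2 t ht1 h'
      · subst h'
        rw [zpow_one, Equiv.Perm.mul_apply, hcinv]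
        exact a.apply_symm_apply (g v)
    · intro a ha
      obtain ⟨b, hb, c, hc, rfl⟩ := Set.mem_mul.mp ha
      refine ⟨mul_mem hb.1 hc.1, fun t ht1 ht2 => ?_⟩
      rw [Equiv.Perm.mul_apply, hc.2 t (by omega) ht2, hb.2 t ht1 (by omega)]
  · intro hfact
    have claim : ∀ u, IsSArc r (m + 2) u →
        ∃ x ∈ G, ∀ k ≤ m + 2, x (u k) = (g ^ ((k : ℤ) - ((m : ℤ) + 1))) v := by
      intro u hu
      obtain ⟨x₁, hx₁G, hx₁⟩ := map_to_canon hGaut hg hvg (m + 1) hm u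
        (fun i hi => hu i (by omega))
      have hx₁' : ∀ k ≤ m + 1, x₁ (u k) = (g ^ ((k : ℤ) - ((m : ℤ) + 1))) v := by
        intro k hk
        have := hx₁ k hk
        have e : ((m + 1 : ℕ) : ℤ) = (m : ℤ) + 1 := by push_cast; ring
        rwa [e] at this
      have hxv : x₁ (u (m + 1)) = v := by
        have := hx₁' (m + 1) le_rfl
        have e : ((m + 1 : ℕ) : ℤ) - ((m : ℤ) + 1) = 0 := by push_cast; ring
        rwa [e, zpow_zero, Equiv.Perm.one_apply] at this
      have hru : r v (x₁ (u (m + 2))) := by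
        have h0 := hu (m + 1) (by omega)
        have := (hGaut x₁ hx₁G _ _).mp h0
        rwa [hxv] at this
      obtain ⟨y, hyA, hyv⟩ := outnbr hGaut hg hvg m hm _ hru
      rw [hfact] at hyA
      obtain ⟨b, hb, c, hc, hbc⟩ := Set.mem_mul.mp hyA
      have hcy : c = b⁻¹ * y := by rw [← hbc]; group
      refine ⟨c * x₁, mul_mem hc.1 hx₁G, fun k hk => ?_⟩
      rcases Nat.lt_or_ge k (m + 2) with h' | h'
      · have hk1 : k ≤ m + 1 := by omega
        rw [Equiv.Perm.mul_apply, hx₁' k hk1]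
        exact hc.2 _ (by omega) (by omega)
      · have e0 : k = m + 2 := by omega
        subst e0
        have hb1 : b (g v) = g v := by
          have := hb.2 1 (by omega) le_rfl
          rwa [zpow_one] at this
        have : (c * x₁) (u (m + 2)) = g v := by
          rw [Equiv.Perm.mul_apply, hcy, Equiv.Perm.mul_apply, hyv, inv_fix hb1]
        rw [this]
        have e : ((m + 2 : ℕ) : ℤ) - ((m : ℤ) + 1) = 1 := by push_cast; ring
        rw [e, zpow_one]
    intro u w hu hw
    obtain ⟨xu, hxuG, hxu⟩ := claim u hu
    obtain ⟨xw, hxwG, hxw⟩ := claim w hw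
    refine ⟨xw⁻¹ * xu, mul_mem (inv_mem hxwG) hxuG, fun k hk => ?_⟩
    rw [Equiv.Perm.mul_apply, hxu k hk, ← hxw k hk]
    exact xw.symm_apply_apply _

lemma conjStab_eq (hg : g ∈ G) (j : ℤ) :
    ConjStab G v g j = {x : Equiv.Perm V | x ∈ G ∧ x ((g ^ (-j)) v) = (g ^ (-j)) v} := by
  ext x
  constructor
  · rintro ⟨y, ⟨hyG, hyv⟩, rfl⟩
    refine ⟨mul_mem (mul_mem (inv_mem (G.zpow_mem hg j)) hyG) (G.zpow_mem hg j), ?_⟩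
    simp [zpow_neg, Equiv.Perm.mul_apply, Equiv.Perm.inv_def, hyv]
  · rintro ⟨hxG, hxv⟩
    refine ⟨g ^ j * x * (g ^ j)⁻¹,
      ⟨mul_mem (mul_mem (G.zpow_mem hg j) hxG) (inv_mem (G.zpow_mem hg j)), ?_⟩, by group⟩
    rw [zpow_neg] at hxv
    simp only [Equiv.Perm.inv_def] at hxv
    simp [Equiv.Perm.mul_apply, hxv]

lemma inter_conjStab (hg : g ∈ G) (a b : ℤ) (hab : a ≤ b) :
    (⋂ j ∈ Set.Icc a b, ConjStab G v g j) = MySt G v g (-b) (-a) := by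
  ext x
  simp only [Set.mem_iInter, Set.mem_Icc, conjStab_eq hg, Set.mem_setOf_eq, MySt]
  constructor
  · intro h
    refine ⟨(h a ⟨le_rfl, hab⟩).1, fun t ht1 ht2 => ?_⟩
    have := (h (-t) ⟨by omega, by omega⟩).2
    simpa using this
  · rintro ⟨hxG, hfix⟩ j hj
    exact ⟨hxG, hfix (-j) (by omega) (by omega)⟩

lemma inter_conjStab' (hg : g ∈ G) (a b : ℤ) (hab : a ≤ b) :
    (⋂ j ∈ Set.Icc a b, ConjStab G v g (j - 1)) = MySt G v g (1 - b) (1 - a) := by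
  ext x
  simp only [Set.mem_iInter, Set.mem_Icc, conjStab_eq hg, Set.mem_setOf_eq, MySt]
  constructor
  · intro h
    refine ⟨(h a ⟨le_rfl, hab⟩).1, fun t ht1 ht2 => ?_⟩
    have := (h (1 - t) ⟨by omega, by omega⟩).2
    have e : -((1 : ℤ) - t - 1) = t := by ring
    rwa [e] at this
  · rintro ⟨hxG, hfix⟩ j hj
    exact ⟨hxG, hfix (-(j - 1)) (by omega) (by omega)⟩

lemma bridge (hg : g ∈ G) (m : ℕ) :
    ((⋂ j ∈ Set.Icc (0 : ℤ) (((m + 1 : ℕ) : ℤ) - 1), ConjStab G v g j) =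
        (⋂ j ∈ Set.Icc (0 : ℤ) ((m + 1 : ℕ) : ℤ), ConjStab G v g (j - 1)) *
          (⋂ j ∈ Set.Icc (0 : ℤ) ((m + 1 : ℕ) : ℤ), ConjStab G v g j)) ↔
      MySt G v g (-(m : ℤ)) 0 = MySt G v g (-(m : ℤ)) 1 * MySt G v g (-(m : ℤ) - 1) 0 := by
  rw [inter_conjStab hg 0 (((m + 1 : ℕ) : ℤ) - 1) (by omega),
    inter_conjStab' hg 0 ((m + 1 : ℕ) : ℤ) (by omega),
    inter_conjStab hg 0 ((m + 1 : ℕ) : ℤ) (by omega)]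
  rw [show -((((m + 1 : ℕ) : ℤ)) - 1) = -(m : ℤ) by push_cast; ring,
    show -(0 : ℤ) = 0 from neg_zero,
    show (1 : ℤ) - ((m + 1 : ℕ) : ℤ) = -(m : ℤ) by push_cast; ring,
    show (1 : ℤ) - 0 = 1 by ring,
    show -((m + 1 : ℕ) : ℤ) = -(m : ℤ) - 1 by push_cast; ring]

end Aux

/-- Let `Γ` be a `G`-arc-transitive digraph, `s ≥ 2`, `v` a vertex and
`g ∈ G` with `v → v^g`. Then `Γ` is `(G,s)`-arc-transitive iff for each `i ∈ {1,…,s−1}`,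
`⋂_{j=0}^{i−1} g⁻ʲG_v gʲ = (⋂_{j=0}^{i} g^{−(j−1)}G_v g^{j−1}) ⬝ (⋂_{j=0}^{i} g⁻ʲG_v gʲ)`. -/
theorem stmt2 {V : Type*} [Finite V] (r : V → V → Prop)
    (hirr : ∀ a, ¬ r a a) (hasym : ∀ a b, r a b → ¬ r b a)
    (G : Subgroup (Equiv.Perm V))
    (hGaut : ∀ g ∈ G, ∀ a b, r a b ↔ r (g a) (g b))
    (harc : ArcTrans r G 1)
    (s : ℕ) (hs : 2 ≤ s)
    (v : V) (g : Equiv.Perm V) (hg : g ∈ G) (hvg : r v (g v)) :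
    ArcTrans r G s ↔
      ∀ i : ℕ, 1 ≤ i → i ≤ s - 1 →
        (⋂ j ∈ Set.Icc (0 : ℤ) ((i : ℤ) - 1), ConjStab G v g j) =
          (⋂ j ∈ Set.Icc (0 : ℤ) (i : ℤ), ConjStab G v g (j - 1)) *
            (⋂ j ∈ Set.Icc (0 : ℤ) (i : ℤ), ConjStab G v g j) := by
  constructor
  · intro hS i hi1 his
    obtain ⟨m, rfl⟩ : ∃ m, i = m + 1 := ⟨i - 1, by omega⟩
    have h2 : ArcTrans r G (m + 2) := by
      have := arcTrans_down hGaut hg hvg harc (m + 2) (by omega) (s - (m + 2))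
      apply this
      rwa [show (m + 2) + (s - (m + 2)) = s by omega]
    have h1 : ArcTrans r G (m + 1) :=
      arcTrans_of_succ hGaut hg hvg harc (m + 1) (by omega) h2
    exact (bridge hg m).mpr ((main_step hGaut hg hvg m h1).mp h2)
  · intro hcond
    have main : ∀ n, 1 ≤ n → n ≤ s → ArcTrans r G n := by
      intro n
      induction n with
      | zero => omega
      | succ k ih =>
          intro h1 h2
          rcases Nat.eq_zero_or_pos k with hk | hk
          · subst hk; exact harc
          · obtain ⟨m, rfl⟩ : ∃ m, k = m + 1 := ⟨k - 1, by omega⟩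
            have hmm : ArcTrans r G (m + 1) := ih (by omega) (by omega)
            have hc := hcond (m + 1) (by omega) (by omega)
            exact (main_step hGaut hg hvg m hmm).mpr ((bridge hg m).mp hc)
    exact main s (by omega) le_rfl
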